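/- (Constant hash initialization makes training identical for all arrangements of the signal.) In the differentiable setting, suppose the hash table is initialized with all keys equal: H₀ i = h₀ for every i ∈ Fin N and some fixed h₀ ∈ EuclideanSpace ℝ (Fin d). Let (θ_k, H_k) be the gradient-descent iterates for L_y starting from (θ₀, H₀), and let (θ'_k, H'_k) be the gradient-descent iterates for L_{y∘σ} starting from the same initial point (θ₀, H₀), for any permutation σ : Fin N ≃ Fin N. Then for every k ∈ ℕ: θ'_k = θ_k and H'_k = H_k∘σ; in particular, the sequence of optimized network parameters θ_k is the same for every arrangement of the signal. -/

import Mathlib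

noncomputable section

/-- The product Hilbert space `E` of network parameters and hash tables. -/
abbrev DinerParamSpace (p N d : ℕ) :=
  WithLp 2 ((EuclideanSpace ℝ (Fin p)) × (PiLp 2 fun _ : Fin N => EuclideanSpace ℝ (Fin d)))

/-- The DINER loss as a function on the product Hilbert space. -/
def dinerLossE {N p d m : ℕ}
    (f : EuclideanSpace ℝ (Fin p) → EuclideanSpace ℝ (Fin d) → (Fin m → ℝ))
    (ℓ : (Fin m → ℝ) → (Fin m → ℝ) → ℝ)
    (y : Fin N → (Fin m → ℝ)) (x : DinerParamSpace p N d) : ℝ :=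
  ∑ i : Fin N, ℓ (f x.fst (x.snd i)) (y i)

/-- Gradient-descent iterates with learning rate `η`, started at `x₀`. -/
def dinerGDIter {N p d m : ℕ}
    (f : EuclideanSpace ℝ (Fin p) → EuclideanSpace ℝ (Fin d) → (Fin m → ℝ))
    (ℓ : (Fin m → ℝ) → (Fin m → ℝ) → ℝ)
    (y : Fin N → (Fin m → ℝ)) (η : ℝ)
    (x₀ : DinerParamSpace p N d) : ℕ → DinerParamSpace p N d
  | 0 => x₀
  | k + 1 => dinerGDIter f ℓ y η x₀ k - η • gradient (dinerLossE f ℓ y) (dinerGDIter f ℓ y η x₀ k)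

open InnerProductSpace

lemma gradient_comp_linearIsometryEquiv
    {E F : Type*} [NormedAddCommGroup E] [InnerProductSpace ℝ E] [CompleteSpace E]
    [NormedAddCommGroup F] [InnerProductSpace ℝ F] [CompleteSpace F]
    (A : E ≃ₗᵢ[ℝ] F) (g : F → ℝ) (x : E) :
    gradient (fun z => g (A z)) x = A.symm (gradient g (A x)) := by
  have hfd : fderiv ℝ (fun z => g (A z)) x
      = (fderiv ℝ g (A x)).comp (A.toContinuousLinearEquiv : E →L[ℝ] F) := by
    have := A.toContinuousLinearEquiv.comp_right_fderiv (f := g) (x := x)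
    exact this
  unfold gradient
  rw [hfd]
  set u := (toDual ℝ F).symm (fderiv ℝ g (A x)) with hu
  have hfu : fderiv ℝ g (A x) = toDual ℝ F u := ((toDual ℝ F).apply_symm_apply _).symm
  rw [hfu]
  refine (toDual ℝ E).symm_apply_eq.mpr ?_
  ext v
  simp only [toDual_apply_apply, ContinuousLinearMap.coe_comp', Function.comp_apply,
    ContinuousLinearEquiv.coe_coe, LinearIsometryEquiv.coe_toContinuousLinearEquiv]
  have := A.inner_map_map (A.symm u) v
  rw [A.apply_symm_apply] at this
  rw [this]

/-- Permuting the hash table is a linear isometry of the parameter space. -/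
def dinerPermIso {p N d : ℕ} (σ : Equiv.Perm (Fin N)) :
    DinerParamSpace p N d ≃ₗᵢ[ℝ] DinerParamSpace p N d where
  toFun x := WithLp.toLp 2 (x.fst, WithLp.toLp 2 (fun i => x.snd (σ i)))
  invFun x := WithLp.toLp 2 (x.fst, WithLp.toLp 2 (fun i => x.snd (σ.symm i)))
  map_add' x y := rfl
  map_smul' c x := rfl
  left_inv x := by
    have h : (fun i => x.snd (σ (σ.symm i))) = ⇑x.snd := funext fun i => by
      rw [Equiv.apply_symm_apply]
    show (WithLp.toLp 2 (x.fst, WithLp.toLp 2 (fun i => x.snd (σ (σ.symm i)))) : DinerParamSpace p N d) = x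
    rw [h]
    rfl
  right_inv x := by
    have h : (fun i => x.snd (σ.symm (σ i))) = ⇑x.snd := funext fun i => by
      rw [Equiv.symm_apply_apply]
    show (WithLp.toLp 2 (x.fst, WithLp.toLp 2 (fun i => x.snd (σ.symm (σ i)))) : DinerParamSpace p N d) = x
    rw [h]
    rfl
  norm_map' x := by
    have hp : 0 < (2 : ENNReal).toReal := by norm_num
    rw [WithLp.prod_norm_eq_add hp, WithLp.prod_norm_eq_add hp]
    show (‖x.fst‖ ^ (2 : ENNReal).toReal +
        ‖LinearIsometryEquiv.piLpCongrLeft 2 ℝ (EuclideanSpace ℝ (Fin d)) σ.symm x.snd‖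
          ^ (2 : ENNReal).toReal) ^ (1 / (2 : ENNReal).toReal)
      = (‖x.fst‖ ^ (2 : ENNReal).toReal + ‖x.snd‖ ^ (2 : ENNReal).toReal)
          ^ (1 / (2 : ENNReal).toReal)
    rw [LinearIsometryEquiv.norm_map]

lemma dinerLossE_perm {N p d m : ℕ}
    (f : EuclideanSpace ℝ (Fin p) → EuclideanSpace ℝ (Fin d) → (Fin m → ℝ))
    (ℓ : (Fin m → ℝ) → (Fin m → ℝ) → ℝ)
    (y : Fin N → (Fin m → ℝ)) (σ : Equiv.Perm (Fin N)) (x : DinerParamSpace p N d) :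
    dinerLossE f ℓ (y ∘ σ) x = dinerLossE f ℓ y ((dinerPermIso σ).symm x) := by
  unfold dinerLossE
  refine Fintype.sum_equiv σ _ _ fun i => ?_
  have h1 : ((dinerPermIso (p := p) (d := d) σ).symm x).fst = x.fst := rfl
  have h2 : ((dinerPermIso (p := p) (d := d) σ).symm x).snd (σ i) = x.snd (σ.symm (σ i)) := rfl
  rw [h1, h2, Equiv.symm_apply_apply]
  rfl

/-- Constant hash initialization makes training identical for all arrangements of
the signal: starting both trainings from the same point `(θ₀, H₀)` with all hash
keys equal to `h₀`, at every step `θ'_k = θ_k` and `H'_k = H_k ∘ σ`. -/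
theorem dinerGDIter_const_init_comp_perm {N p d m : ℕ}
    (f : EuclideanSpace ℝ (Fin p) → EuclideanSpace ℝ (Fin d) → (Fin m → ℝ))
    (ℓ : (Fin m → ℝ) → (Fin m → ℝ) → ℝ)
    (y : Fin N → (Fin m → ℝ)) (σ : Equiv.Perm (Fin N))
    (hdiff : ∀ i : Fin N,
      Differentiable ℝ (fun q : (EuclideanSpace ℝ (Fin p)) × (EuclideanSpace ℝ (Fin d)) =>
        ℓ (f q.1 q.2) (y i)))
    (hdiff' : ∀ i : Fin N,
      Differentiable ℝ (fun q : (EuclideanSpace ℝ (Fin p)) × (EuclideanSpace ℝ (Fin d)) =>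
        ℓ (f q.1 q.2) ((y ∘ σ) i)))
    (η : ℝ)
    (θ₀ : EuclideanSpace ℝ (Fin p))
    (H₀ : PiLp 2 fun _ : Fin N => EuclideanSpace ℝ (Fin d))
    (h₀ : EuclideanSpace ℝ (Fin d)) (hconst : ∀ i : Fin N, H₀ i = h₀) :
    ∀ k : ℕ,
      (dinerGDIter f ℓ (y ∘ σ) η (WithLp.toLp 2 (θ₀, H₀) : DinerParamSpace p N d) k).fst =
          (dinerGDIter f ℓ y η (WithLp.toLp 2 (θ₀, H₀) : DinerParamSpace p N d) k).fst ∧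
      (dinerGDIter f ℓ (y ∘ σ) η (WithLp.toLp 2 (θ₀, H₀) : DinerParamSpace p N d) k).snd =
          (fun i => (dinerGDIter f ℓ y η (WithLp.toLp 2 (θ₀, H₀) : DinerParamSpace p N d) k).snd (σ i)) := by
  have hgrad : ∀ x : DinerParamSpace p N d,
      gradient (dinerLossE f ℓ (y ∘ σ)) x
        = dinerPermIso σ (gradient (dinerLossE f ℓ y) ((dinerPermIso σ).symm x)) := by
    intro x
    have hfun : dinerLossE f ℓ (y ∘ σ)
        = fun z => dinerLossE f ℓ y ((dinerPermIso (p := p) (d := d) σ).symm z) :=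
      funext fun z => dinerLossE_perm f ℓ y σ z
    rw [hfun, gradient_comp_linearIsometryEquiv (dinerPermIso σ).symm _ x,
      LinearIsometryEquiv.symm_symm]
  have key : ∀ k, dinerGDIter f ℓ (y ∘ σ) η (WithLp.toLp 2 (θ₀, H₀) : DinerParamSpace p N d) k
      = dinerPermIso σ (dinerGDIter f ℓ y η (WithLp.toLp 2 (θ₀, H₀) : DinerParamSpace p N d) k) := by
    intro k
    induction k with
    | zero =>
      show (WithLp.toLp 2 (θ₀, H₀) : DinerParamSpace p N d) = WithLp.toLp 2 (θ₀, WithLp.toLp 2 (fun i => H₀ (σ i)))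
      have : (fun i => H₀ (σ i)) = ⇑H₀ := funext fun i => by rw [hconst, hconst]
      rw [this]
    | succ k ih =>
      show dinerGDIter f ℓ (y ∘ σ) η _ k
          - η • gradient (dinerLossE f ℓ (y ∘ σ)) (dinerGDIter f ℓ (y ∘ σ) η _ k) = _
      rw [ih, hgrad, LinearIsometryEquiv.symm_apply_apply, ← map_smul, ← map_sub]
      rfl
  intro k
  rw [key k]
  exact ⟨rfl, rfl⟩
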